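/- Fix a real k > −1 and r > 0 with J_{k+1}(r) ≠ 0 and r² ≠ 4(k+2)(k+3). Then J_{k+4}(r) = 0 if and only if r·J_k(r)/J_{k+1}(r) = 2(k+1) − 2(k+3)·r²/(4(k+2)(k+3) − r²). -/

import Mathlib

open Real

/-- Bessel function of the first kind of real order `k`, defined by its power series
(valid for `r > 0`, using real powers). -/
noncomputable def besselJ (k r : ℝ) : ℝ :=
  ∑' m : ℕ, ((-1 : ℝ) ^ m / (m.factorial * Real.Gamma (m + k + 1))) * (r / 2) ^ ((2 * m : ℝ) + k)

/-- The `m`-th term of the Bessel series. -/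
noncomputable def besselTerm (k r : ℝ) (m : ℕ) : ℝ :=
  ((-1 : ℝ) ^ m / (m.factorial * Real.Gamma (m + k + 1))) * (r / 2) ^ ((2 * m : ℝ) + k)

lemma besselJ_eq (k r : ℝ) : besselJ k r = ∑' m, besselTerm k r m := rfl

lemma besselTerm_succ (k r : ℝ) (hk : -1 < k) (hr : 0 < r) (m : ℕ) :
    besselTerm k r (m + 1) =
      besselTerm k r m * (-(((r/2)^2) / ((m+1) * ((m:ℝ) + k + 1)))) := by
  have hp : (0:ℝ) < r/2 := by linarith
  have hm : (0:ℝ) ≤ m := Nat.cast_nonneg m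
  have hGp : (0:ℝ) < (m:ℝ) + k + 1 := by linarith
  have hG : ((m:ℝ) + k + 1) ≠ 0 := ne_of_gt hGp
  have hGpos : 0 < Real.Gamma ((m:ℝ) + k + 1) := Real.Gamma_pos_of_pos hGp
  unfold besselTerm
  rw [Nat.factorial_succ]
  push_cast
  have he : (2 * ((m:ℝ)+1) : ℝ) + k = ((2 * m : ℝ) + k) + 2 := by ring
  have hg : ((m:ℝ)+1 : ℝ) + k + 1 = ((m:ℝ) + k + 1) + 1 := by ring
  rw [he, hg, Real.rpow_add hp, Real.Gamma_add_one hG, Real.rpow_two]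
  rw [pow_succ]
  field_simp

lemma besselTerm_summable (k r : ℝ) (hk : -1 < k) (hr : 0 < r) :
    Summable (besselTerm k r) := by
  have hp : (0:ℝ) < r/2 := by linarith
  apply summable_of_ratio_norm_eventually_le (r := 1/2) (by norm_num)
  filter_upwards [Filter.eventually_ge_atTop (⌈2*(r/2)^2⌉₊ + 1)] with n hn
  have hn1 : (1:ℕ) ≤ n := le_trans (Nat.le_add_left 1 _) hn
  have hn2 : 2*(r/2)^2 ≤ (n:ℝ) := le_trans (Nat.le_ceil _) (by exact_mod_cast le_trans (Nat.le_add_right _ 1) hn)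
  have hnk : (1:ℝ) ≤ (n:ℝ) + k + 1 := by
    have : (1:ℝ) ≤ (n:ℝ) := by exact_mod_cast hn1
    linarith
  rw [besselTerm_succ k r hk hr n, norm_mul]
  rw [mul_comm (1/2 : ℝ)]
  apply mul_le_mul_of_nonneg_left _ (norm_nonneg _)
  rw [norm_neg, norm_div, Real.norm_eq_abs, Real.norm_eq_abs]
  rw [abs_of_nonneg (by positivity : (0:ℝ) ≤ (r/2)^2),
      abs_of_pos (by nlinarith : (0:ℝ) < ((n:ℝ)+1) * ((n:ℝ) + k + 1))]
  rw [div_le_iff₀ (by nlinarith)]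
  nlinarith [sq_nonneg ((n:ℝ)+k)]

lemma besselTerm_key (k r : ℝ) (hk : -1 < k) (hr : 0 < r) (m : ℕ) :
    r * besselTerm (k+2) r m =
      2*(k+1) * besselTerm (k+1) r (m+1) - r * besselTerm k r (m+1) := by
  have hp : (0:ℝ) < r/2 := by linarith
  have hm : (0:ℝ) ≤ m := Nat.cast_nonneg m
  have hG1p : (0:ℝ) < (m:ℝ) + k + 1 := by linarith
  have hG2p : (0:ℝ) < (m:ℝ) + k + 2 := by linarith
  have hGpos : 0 < Real.Gamma ((m:ℝ) + k + 1) := Real.Gamma_pos_of_pos hG1p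
  unfold besselTerm
  rw [Nat.factorial_succ]
  push_cast
  have e1 : (2 * (m:ℝ)) + (k+2) = ((2 * m : ℝ) + k) + 2 := by ring
  have e2 : (2 * ((m:ℝ)+1)) + (k+1) = ((2 * m : ℝ) + k) + 3 := by ring
  have e3 : (2 * ((m:ℝ)+1)) + k = ((2 * m : ℝ) + k) + 2 := by ring
  have g1 : (m:ℝ) + (k+2) + 1 = ((m:ℝ) + k + 2) + 1 := by ring
  have g2 : (m:ℝ) + 1 + (k+1) + 1 = ((m:ℝ) + k + 2) + 1 := by ring
  have g3 : (m:ℝ) + 1 + k + 1 = ((m:ℝ) + k + 1) + 1 := by ring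
  have g4 : (m:ℝ) + k + 2 = ((m:ℝ) + k + 1) + 1 := by ring
  rw [e1, e2, e3, g1, g2, g3, Real.rpow_add hp, Real.rpow_add hp ((2*m:ℝ)+k) 3,
      Real.Gamma_add_one (ne_of_gt hG2p), Real.Gamma_add_one (ne_of_gt hG1p), g4,
      Real.Gamma_add_one (ne_of_gt hG1p)]
  have h2 : (r/2) ^ (2:ℝ) = (r/2)^2 := Real.rpow_two _
  have h3 : (r/2) ^ (3:ℝ) = (r/2)^3 := by
    rw [show (3:ℝ) = ((3:ℕ):ℝ) by norm_num, Real.rpow_natCast]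
  rw [h2, h3, pow_succ]
  field_simp
  ring

lemma besselTerm_base (k r : ℝ) (hk : -1 < k) (hr : 0 < r) :
    r * besselTerm k r 0 = 2*(k+1) * besselTerm (k+1) r 0 := by
  have hp : (0:ℝ) < r/2 := by linarith
  have hk1 : (0:ℝ) < k + 1 := by linarith
  have hGpos : 0 < Real.Gamma (k + 1) := Real.Gamma_pos_of_pos hk1
  unfold besselTerm
  simp only [Nat.cast_zero, pow_zero, Nat.factorial_zero, Nat.cast_one]
  have e1 : (2 * (0:ℝ)) + k = k := by ring
  have e2 : (2 * (0:ℝ)) + (k+1) = k + 1 := by ring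
  have g1 : (0:ℝ) + k + 1 = k + 1 := by ring
  have g2 : (0:ℝ) + (k+1) + 1 = (k+1) + 1 := by ring
  rw [e1, e2, g1, g2, Real.Gamma_add_one (ne_of_gt hk1),
      show k + 1 = k + (1:ℝ) from rfl, Real.rpow_add hp, Real.rpow_one]
  field_simp

/-- The three-term recurrence `r J_k + r J_{k+2} = 2(k+1) J_{k+1}`. -/
lemma besselJ_rec (k r : ℝ) (hk : -1 < k) (hr : 0 < r) :
    r * besselJ k r + r * besselJ (k+2) r = 2*(k+1) * besselJ (k+1) r := by
  have S0 := besselTerm_summable k r hk hr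
  have S1 := besselTerm_summable (k+1) r (by linarith) hr
  have S2 := besselTerm_summable (k+2) r (by linarith) hr
  have S1' : Summable (fun m => besselTerm (k+1) r (m+1)) := (summable_nat_add_iff 1).mpr S1
  have S0' : Summable (fun m => besselTerm k r (m+1)) := (summable_nat_add_iff 1).mpr S0
  have h1 : r * besselJ (k+2) r =
      ∑' m, (2*(k+1) * besselTerm (k+1) r (m+1) - r * besselTerm k r (m+1)) := by
    rw [besselJ_eq, ← tsum_mul_left]
    exact tsum_congr (besselTerm_key k r hk hr)
  rw [h1, Summable.tsum_sub (S1'.mul_left _) (S0'.mul_left _), tsum_mul_left, tsum_mul_left]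
  have z1 : ∑' m, besselTerm (k+1) r (m+1) = besselJ (k+1) r - besselTerm (k+1) r 0 := by
    rw [besselJ_eq, Summable.tsum_eq_zero_add S1]; ring
  have z0 : ∑' m, besselTerm k r (m+1) = besselJ k r - besselTerm k r 0 := by
    rw [besselJ_eq, Summable.tsum_eq_zero_add S0]; ring
  rw [z1, z0]
  have hb := besselTerm_base k r hk hr
  ring_nf
  ring_nf at hb
  linarith

/-- `J_{k+4}(r) = 0` iff `F_k(r) = 2(k+1) - 2(k+3)r²/(4(k+2)(k+3) - r²)`. -/
theorem besselJ_add_four_zero_iff (k : ℝ) (hk : -1 < k) (r : ℝ) (hr : 0 < r)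
    (h : besselJ (k + 1) r ≠ 0) (h4 : r ^ 2 ≠ 4 * (k + 2) * (k + 3)) :
    besselJ (k + 4) r = 0 ↔
      r * besselJ k r / besselJ (k + 1) r =
        2 * (k + 1) - 2 * (k + 3) * r ^ 2 / (4 * (k + 2) * (k + 3) - r ^ 2) := by
  have hD : 4 * (k + 2) * (k + 3) - r ^ 2 ≠ 0 := sub_ne_zero.mpr (Ne.symm h4)
  have hD' : (k + 3) * 4 * (k + 2) - r ^ 2 ≠ 0 := by contrapose! hD; linear_combination hD
  have hrne : r ≠ 0 := ne_of_gt hr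
  have E1 := besselJ_rec k r hk hr
  have E2 := besselJ_rec (k+1) r (by linarith) hr
  have E3 := besselJ_rec (k+2) r (by linarith) hr
  rw [show k+1+2 = k+3 by ring, show k+1+1 = k+2 by ring] at E2
  rw [show k+2+2 = k+4 by ring, show k+2+1 = k+3 by ring] at E3
  set a := besselJ k r
  set b := besselJ (k+1) r
  set c := besselJ (k+2) r
  set d := besselJ (k+3) r
  set e := besselJ (k+4) r
  constructor
  · intro he
    rw [he] at E3
    field_simp
    linear_combination (4*(k+2)*(k+3)-r^2) * E1 + 2*(k+3)*r * E2 + r^2 * E3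
  · intro heq
    field_simp at heq
    have h3 : r^3 * e = 0 := by
      linear_combination (4*(k+2)*(k+3)-r^2) * E1 + 2*(k+3)*r * E2 + r^2 * E3 - heq
    have := mul_eq_zero.mp h3
    rcases this with h' | h'
    · exact absurd h' (pow_ne_zero 3 hrne)
    · exact h'
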